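/- Let λ, μ : ℝ → ℝ be locally Lipschitz functions that are nonnegative on [0,1], set f(a) = (1 − a) λ(a) − a μ(a), and assume λ(0) > 0 and that there exists a* ∈ (0,1] with f(a*) = 0 and f(a) > 0 for all a ∈ [0, a*). Let â be the solution of the activation-fraction ODE with â(0) = 0, and for γ ∈ (0,1) define the trigger time τ̂^γ = inf{t ≥ 0 : â(t) ≥ γ}. Then: (i) for every γ ∈ (0, a*) the trigger time τ̂^γ is finite; (ii) for every γ with a* < γ < 1 the set {t ≥ 0 : â(t) ≥ γ} is empty, i.e. τ̂^γ = ∞. -/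

import Mathlib

open Set Metric

lemma exists_lipschitz_ball (lam mu : ℝ → ℝ)
    (hlam : LocallyLipschitz lam) (hmu : LocallyLipschitz mu) (c : ℝ) :
    ∃ (K : NNReal) (r : ℝ), 0 < r ∧
      LipschitzOnWith K (fun a => (1 - a) * lam a - a * mu a) (closedBall c r) := by
  obtain ⟨K₁, t₁, ht₁, hK₁⟩ := hlam c
  obtain ⟨K₂, t₂, ht₂, hK₂⟩ := hmu c
  obtain ⟨r₁, hr₁, hb₁⟩ := Metric.nhds_basis_closedBall.mem_iff.mp ht₁
  obtain ⟨r₂, hr₂, hb₂⟩ := Metric.nhds_basis_closedBall.mem_iff.mp ht₂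
  set r := min r₁ r₂ with hr
  have hrpos : 0 < r := lt_min hr₁ hr₂
  have hB₁ : closedBall c r ⊆ t₁ :=
    (closedBall_subset_closedBall (min_le_left _ _)).trans hb₁
  have hB₂ : closedBall c r ⊆ t₂ :=
    (closedBall_subset_closedBall (min_le_right _ _)).trans hb₂
  have hL₁ : LipschitzOnWith K₁ lam (closedBall c r) := hK₁.mono hB₁
  have hL₂ : LipschitzOnWith K₂ mu (closedBall c r) := hK₂.mono hB₂
  set M₁ : ℝ := |lam c| + K₁ * r with hM₁
  set M₂ : ℝ := |mu c| + K₂ * r with hM₂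
  have hcball : c ∈ closedBall c r := mem_closedBall_self hrpos.le
  have hbound₁ : ∀ x ∈ closedBall c r, |lam x| ≤ M₁ := by
    intro x hx
    have h := hL₁.dist_le_mul x hx c hcball
    rw [Real.dist_eq, Real.dist_eq] at h
    have hxc : |x - c| ≤ r := by rwa [mem_closedBall, Real.dist_eq] at hx
    have : |lam x - lam c| ≤ K₁ * r := h.trans (by
      have : (0:ℝ) ≤ K₁ := K₁.coe_nonneg
      nlinarith [abs_nonneg (x - c)])
    have := abs_sub_abs_le_abs_sub (lam x) (lam c)
    simp only [hM₁]; linarith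
  have hbound₂ : ∀ x ∈ closedBall c r, |mu x| ≤ M₂ := by
    intro x hx
    have h := hL₂.dist_le_mul x hx c hcball
    rw [Real.dist_eq, Real.dist_eq] at h
    have hxc : |x - c| ≤ r := by rwa [mem_closedBall, Real.dist_eq] at hx
    have : |mu x - mu c| ≤ K₂ * r := h.trans (by
      have : (0:ℝ) ≤ K₂ := K₂.coe_nonneg
      nlinarith [abs_nonneg (x - c)])
    have := abs_sub_abs_le_abs_sub (mu x) (mu c)
    simp only [hM₂]; linarith
  set C : ℝ := |1 - c| + r with hC
  set D : ℝ := |c| + r with hD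
  have hCx : ∀ x ∈ closedBall c r, |1 - x| ≤ C := by
    intro x hx
    have hxc : |x - c| ≤ r := by rwa [mem_closedBall, Real.dist_eq] at hx
    have h := abs_sub (1 - c) (x - c)
    have he : (1 - c) - (x - c) = 1 - x := by ring
    calc |1 - x| = |(1 - c) - (x - c)| := by rw [he]
      _ ≤ |1 - c| + |x - c| := abs_sub _ _
      _ ≤ C := by simp only [hC]; linarith
  have hDx : ∀ x ∈ closedBall c r, |x| ≤ D := by
    intro x hx
    have hxc : |x - c| ≤ r := by rwa [mem_closedBall, Real.dist_eq] at hx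
    calc |x| = |c + (x - c)| := by ring_nf
      _ ≤ |c| + |x - c| := abs_add_le _ _
      _ ≤ D := by simp only [hD]; linarith
  set Kr : ℝ := C * K₁ + M₁ + D * K₂ + M₂ with hKr
  refine ⟨Kr.toNNReal, r, hrpos, LipschitzOnWith.of_dist_le_mul ?_⟩
  intro x hx y hy
  have hdl : |lam x - lam y| ≤ K₁ * |x - y| := by
    have h := hL₁.dist_le_mul x hx y hy
    rwa [Real.dist_eq, Real.dist_eq] at h
  have hdm : |mu x - mu y| ≤ K₂ * |x - y| := by
    have h := hL₂.dist_le_mul x hx y hy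
    rwa [Real.dist_eq, Real.dist_eq] at h
  have e : ((1 - x) * lam x - x * mu x) - ((1 - y) * lam y - y * mu y)
      = (1 - x) * (lam x - lam y) + (y - x) * lam y
        - (x * (mu x - mu y) + (x - y) * mu y) := by ring
  rw [Real.dist_eq, Real.dist_eq]
  have habs : |((1 - x) * lam x - x * mu x) - ((1 - y) * lam y - y * mu y)|
      ≤ |(1 - x) * (lam x - lam y)| + |(y - x) * lam y|
        + (|x * (mu x - mu y)| + |(x - y) * mu y|) := by
    rw [e]
    calc |(1 - x) * (lam x - lam y) + (y - x) * lam y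
        - (x * (mu x - mu y) + (x - y) * mu y)|
        ≤ |(1 - x) * (lam x - lam y) + (y - x) * lam y|
          + |x * (mu x - mu y) + (x - y) * mu y| := abs_sub _ _
      _ ≤ |(1 - x) * (lam x - lam y)| + |(y - x) * lam y|
          + (|x * (mu x - mu y)| + |(x - y) * mu y|) := by
            gcongr <;> exact abs_add_le _ _
  have h1 : |(1 - x) * (lam x - lam y)| ≤ C * (K₁ * |x - y|) := by
    rw [abs_mul]
    exact mul_le_mul (hCx x hx) hdl (abs_nonneg _) (by positivity)
  have h2 : |(y - x) * lam y| ≤ M₁ * |x - y| := by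
    rw [abs_mul, abs_sub_comm y x]
    exact mul_le_mul_of_nonneg_left (hbound₁ y hy) (abs_nonneg _) |>.trans_eq (mul_comm _ _)
  have h3 : |x * (mu x - mu y)| ≤ D * (K₂ * |x - y|) := by
    rw [abs_mul]
    exact mul_le_mul (hDx x hx) hdm (abs_nonneg _) (by positivity)
  have h4 : |(x - y) * mu y| ≤ M₂ * |x - y| := by
    rw [abs_mul]
    exact mul_le_mul_of_nonneg_left (hbound₂ y hy) (abs_nonneg _) |>.trans_eq (mul_comm _ _)
  have hKnn : Kr ≤ (Kr.toNNReal : ℝ) := Real.le_coe_toNNReal Kr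
  have : |((1 - x) * lam x - x * mu x) - ((1 - y) * lam y - y * mu y)|
      ≤ Kr * |x - y| := by simp only [hKr]; nlinarith [abs_nonneg (x - y)]
  calc |((1 - x) * lam x - x * mu x) - ((1 - y) * lam y - y * mu y)|
      ≤ Kr * |x - y| := this
    _ ≤ (Kr.toNNReal : ℝ) * |x - y| := mul_le_mul_of_nonneg_right hKnn (abs_nonneg _)

/-- Under the hypotheses of Statement 1, for the trigger time
`τ̂^γ = inf {t ≥ 0 : ahat t ≥ γ}` one has:
(i) for every `γ ∈ (0, astar)` the trigger time is finite, i.e. the set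
`{t ≥ 0 : ahat t ≥ γ}` is nonempty;
(ii) for every `γ` with `astar < γ < 1` that set is empty, i.e. `τ̂^γ = ∞`. -/
theorem activation_fraction_trigger_time
    (lam mu : ℝ → ℝ)
    (hlam : LocallyLipschitz lam) (hmu : LocallyLipschitz mu)
    (hlam_nonneg : ∀ a ∈ Set.Icc (0 : ℝ) 1, 0 ≤ lam a)
    (hmu_nonneg : ∀ a ∈ Set.Icc (0 : ℝ) 1, 0 ≤ mu a)
    (hlam0 : 0 < lam 0)
    (astar : ℝ) (hastar : astar ∈ Set.Ioc (0 : ℝ) 1)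
    (hfzero : (1 - astar) * lam astar - astar * mu astar = 0)
    (hfpos : ∀ a ∈ Set.Ico (0 : ℝ) astar, 0 < (1 - a) * lam a - a * mu a)
    (ahat : ℝ → ℝ) (h0 : ahat 0 = 0)
    (hode : ∀ t ≥ (0 : ℝ),
      HasDerivAt ahat ((1 - ahat t) * lam (ahat t) - ahat t * mu (ahat t)) t) :
    (∀ γ ∈ Set.Ioo (0 : ℝ) astar,
      {t : ℝ | 0 ≤ t ∧ γ ≤ ahat t}.Nonempty) ∧
    (∀ γ : ℝ, astar < γ → γ < 1 →
      {t : ℝ | 0 ≤ t ∧ γ ≤ ahat t} = ∅) := by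
  set f : ℝ → ℝ := fun a => (1 - a) * lam a - a * mu a with hf
  have hfcont : Continuous f := by
    apply Continuous.sub
    · exact (continuous_const.sub continuous_id).mul hlam.continuous
    · exact continuous_id.mul hmu.continuous
  have hcontAt : ∀ t : ℝ, 0 ≤ t → ContinuousAt ahat t :=
    fun t ht => (hode t ht).continuousAt
  -- Key 1: ahat never exceeds astar.
  have key1 : ∀ t : ℝ, 0 ≤ t → ahat t ≤ astar := by
    intro t₁ ht₁
    by_contra hgt
    push_neg at hgt
    have ht₁pos : 0 < t₁ := by
      rcases lt_or_eq_of_le ht₁ with h | h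
      · exact h
      · exfalso; rw [← h, h0] at hgt; linarith [hastar.1]
    set S : Set ℝ := {t ∈ Icc (0:ℝ) t₁ | ahat t ≤ astar} with hS
    have hScl : IsClosed S := by
      have hco : ContinuousOn ahat (Icc (0:ℝ) t₁) :=
        fun t ht => (hcontAt t ht.1).continuousWithinAt
      exact hco.preimage_isClosed_of_isClosed isClosed_Icc isClosed_Iic
    have hSne : S.Nonempty := ⟨0, ⟨le_refl _, ht₁pos.le⟩, by rw [h0]; exact hastar.1.le⟩
    have hSbdd : BddAbove S := ⟨t₁, fun x hx => hx.1.2⟩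
    set s := sSup S with hs
    have hsS : s ∈ S := hScl.csSup_mem hSne hSbdd
    have hs0 : 0 ≤ s := hsS.1.1
    have hslt : s < t₁ := by
      rcases lt_or_eq_of_le hsS.1.2 with h | h
      · exact h
      · exfalso; rw [h] at hsS; exact absurd hsS.2 (not_le.mpr hgt)
    have habove : ∀ u ∈ Ioc s t₁, astar < ahat u := by
      intro u hu
      by_contra hle
      push_neg at hle
      have : u ∈ S := ⟨⟨hs0.trans hu.1.le, hu.2⟩, hle⟩
      exact absurd (le_csSup hSbdd this) (not_le.mpr hu.1)
    have hseq : ahat s = astar := by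
      refine le_antisymm hsS.2 ?_
      have htend : Filter.Tendsto ahat (nhdsWithin s (Ioi s)) (nhds (ahat s)) :=
        (hcontAt s hs0).tendsto.mono_left nhdsWithin_le_nhds
      have hne : (nhdsWithin s (Ioi s)).NeBot := nhdsGT_neBot s
      refine ge_of_tendsto htend ?_
      filter_upwards [Ioc_mem_nhdsGT_of_mem ⟨le_refl s, hslt⟩] with u hu
      exact (habove u hu).le
    obtain ⟨K, r, hrpos, hKlip⟩ := exists_lipschitz_ball lam mu hlam hmu astar
    have hcs : ContinuousAt ahat s := hcontAt s hs0
    have hball : ∀ᶠ u in nhds s, ahat u ∈ closedBall astar r :=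
      hcs (by rw [hseq]; exact closedBall_mem_nhds _ hrpos)
    obtain ⟨δ, hδpos, hδ⟩ := Metric.eventually_nhds_iff.mp hball
    set b := min (s + δ / 2) t₁ with hb
    have hsb : s < b := lt_min (by linarith) hslt
    have hmem : ∀ u ∈ Icc s b, ahat u ∈ closedBall astar r := by
      intro u hu
      apply hδ
      rw [Real.dist_eq, abs_of_nonneg (by linarith [hu.1])]
      have : u ≤ s + δ / 2 := hu.2.trans (min_le_left _ _)
      linarith
    have huniq : EqOn ahat (fun _ => astar) (Icc s b) := by
      apply ODE_solution_unique_of_mem_Icc_right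
        (v := fun _ x => f x) (s := fun _ => closedBall astar r) (K := K)
        (fun _ _ => hKlip)
      · exact fun u hu => (hcontAt u (hs0.trans hu.1)).continuousWithinAt
      · exact fun u hu => ((hode u (hs0.trans hu.1)).hasDerivWithinAt)
      · exact fun u hu => hmem u ⟨hu.1, hu.2.le⟩
      · exact continuousOn_const
      · intro u hu
        have hz : f astar = 0 := hfzero
        simpa [hz] using (hasDerivWithinAt_const u (Ici u) astar)
      · exact fun u hu => mem_closedBall_self hrpos.le
      · simp [hseq]
    have hbval : ahat b = astar := huniq ⟨hsb.le, le_refl b⟩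
    have : astar < ahat b := habove b ⟨hsb, min_le_right _ _⟩
    linarith
  -- Key 2: ahat is nonnegative.
  have key2 : ∀ t : ℝ, 0 ≤ t → 0 ≤ ahat t := by
    intro t₁ ht₁
    by_contra hneg
    push_neg at hneg
    have ht₁pos : 0 < t₁ := by
      rcases lt_or_eq_of_le ht₁ with h | h
      · exact h
      · exfalso; rw [← h, h0] at hneg; linarith
    set S : Set ℝ := {t ∈ Icc (0:ℝ) t₁ | 0 ≤ ahat t} with hS
    have hScl : IsClosed S := by
      have hco : ContinuousOn ahat (Icc (0:ℝ) t₁) :=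
        fun t ht => (hcontAt t ht.1).continuousWithinAt
      exact hco.preimage_isClosed_of_isClosed isClosed_Icc isClosed_Ici
    have hSne : S.Nonempty := ⟨0, ⟨le_refl _, ht₁pos.le⟩, by rw [h0]⟩
    have hSbdd : BddAbove S := ⟨t₁, fun x hx => hx.1.2⟩
    set s := sSup S with hs
    have hsS : s ∈ S := hScl.csSup_mem hSne hSbdd
    have hs0 : 0 ≤ s := hsS.1.1
    have hslt : s < t₁ := by
      rcases lt_or_eq_of_le hsS.1.2 with h | h
      · exact h
      · exfalso; rw [h] at hsS; exact absurd hsS.2 (not_le.mpr hneg)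
    have hbelow : ∀ u ∈ Ioc s t₁, ahat u < 0 := by
      intro u hu
      by_contra hle
      push_neg at hle
      have : u ∈ S := ⟨⟨hs0.trans hu.1.le, hu.2⟩, hle⟩
      exact absurd (le_csSup hSbdd this) (not_le.mpr hu.1)
    have hseq : ahat s = 0 := by
      refine le_antisymm ?_ hsS.2
      have htend : Filter.Tendsto ahat (nhdsWithin s (Ioi s)) (nhds (ahat s)) :=
        (hcontAt s hs0).tendsto.mono_left nhdsWithin_le_nhds
      have hne : (nhdsWithin s (Ioi s)).NeBot := nhdsGT_neBot s
      refine le_of_tendsto htend ?_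
      filter_upwards [Ioc_mem_nhdsGT_of_mem ⟨le_refl s, hslt⟩] with u hu
      exact (hbelow u hu).le
    have hds : HasDerivAt ahat (lam 0) s := by
      have := hode s hs0
      rwa [hseq, sub_zero, one_mul, zero_mul, sub_zero] at this
    have hslope : Filter.Tendsto (slope ahat s) (nhdsWithin s {s}ᶜ) (nhds (lam 0)) :=
      hasDerivAt_iff_tendsto_slope.mp hds
    have hslope' : Filter.Tendsto (slope ahat s) (nhdsWithin s (Ioi s)) (nhds (lam 0)) :=
      hslope.mono_left (nhdsWithin_mono s (fun x hx => ne_of_gt hx))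
    have hposev : ∀ᶠ u in nhdsWithin s (Ioi s), 0 < slope ahat s u :=
      hslope'.eventually (eventually_gt_nhds hlam0)
    have hIoc : Ioc s t₁ ∈ nhdsWithin s (Ioi s) :=
      Ioc_mem_nhdsGT_of_mem ⟨le_refl s, hslt⟩
    have hne : (nhdsWithin s (Ioi s)).NeBot := nhdsGT_neBot s
    obtain ⟨u, hu1, hu2⟩ :=
      (hposev.and (Filter.eventually_of_mem hIoc (fun x hx => hx))).exists
    rw [slope_def_field] at hu1
    have husub : 0 < u - s := sub_pos.mpr hu2.1
    have h2 : 0 < ahat u - ahat s := by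
      have hm := mul_pos hu1 husub
      rwa [div_mul_cancel₀ _ (ne_of_gt husub)] at hm
    have : ahat u < 0 := hbelow u hu2
    rw [hseq] at h2
    linarith
  constructor
  · -- part (i)
    rintro γ ⟨hγ0, hγa⟩
    by_contra hempty
    rw [Set.not_nonempty_iff_eq_empty] at hempty
    have hlt : ∀ t : ℝ, 0 ≤ t → ahat t < γ := by
      intro t ht
      by_contra h
      push_neg at h
      have : t ∈ {t : ℝ | 0 ≤ t ∧ γ ≤ ahat t} := ⟨ht, h⟩
      rw [hempty] at this
      exact this
    obtain ⟨x₀, hx₀, hminOn⟩ :=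
      (isCompact_Icc (a := (0:ℝ)) (b := γ)).exists_isMinOn
        ⟨0, le_refl _, hγ0.le⟩ hfcont.continuousOn
    set m := f x₀ with hm
    have hmpos : 0 < m := hfpos x₀ ⟨hx₀.1, lt_of_le_of_lt hx₀.2 hγa⟩
    set T := γ / m + 1 with hT
    have hTpos : 0 < T := by positivity
    have hderiv : ∀ t ∈ Icc (0:ℝ) T,
        HasDerivAt (fun u => ahat u - m * u) (f (ahat t) - m) t := by
      intro t ht
      exact (hode t ht.1).sub (by simpa using (hasDerivAt_id t).const_mul m)
    have hmono : MonotoneOn (fun u => ahat u - m * u) (Icc (0:ℝ) T) := by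
      apply monotoneOn_of_deriv_nonneg (convex_Icc 0 T)
      · exact fun t ht => ((hderiv t ht).continuousAt).continuousWithinAt
      · intro t ht
        rw [interior_Icc] at ht
        exact ((hderiv t ⟨ht.1.le, ht.2.le⟩).differentiableAt).differentiableWithinAt
      · intro t ht
        rw [interior_Icc] at ht
        rw [(hderiv t ⟨ht.1.le, ht.2.le⟩).deriv]
        have hmem : ahat t ∈ Icc (0:ℝ) γ := ⟨key2 t ht.1.le, (hlt t ht.1.le).le⟩
        have hlef : f x₀ ≤ f (ahat t) := isMinOn_iff.mp hminOn _ hmem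
        simpa using sub_nonneg.mpr hlef
    have hle := hmono ⟨le_refl (0:ℝ), hTpos.le⟩ ⟨hTpos.le, le_refl T⟩ hTpos.le
    simp only [h0, mul_zero, sub_zero, zero_sub] at hle
    have hmT : m * T = γ + m := by
      rw [hT, mul_add, mul_one, mul_div_cancel₀ _ (ne_of_gt hmpos)]
    have hTlt : ahat T < γ := hlt T hTpos.le
    -- hle : -(0) ≤ ahat T - m * T  roughly; derive contradiction
    have : m * T ≤ ahat T := by linarith [hle]
    linarith
  · -- part (ii)
    intro γ hγ1 _
    ext t
    simp only [Set.mem_setOf_eq, Set.mem_empty_iff_false, iff_false, not_and, not_le]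
    intro ht
    exact lt_of_le_of_lt (key1 t ht) hγ1
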